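/- (Axial generalized structure factor of a twisted wave.) Let α ∈ ℤ, β ∈ ℝ, γ > 0 and n ∈ ℂ³, let E₀ be the twisted wave with parameters (α,β,γ) and polarization vector n, let ρ : ℝ³ → ℂ be integrable, and let Z ∈ ℝ. Then ∫_{ℝ³} E₀(y) ρ(y) e^{−i Z y₃} dy = N(n) v, where v ∈ ℂ³ has components v_j = ∫_{ℝ³} ρ(y) e^{i((α+σ_j) φ(y) + (β − Z) y₃)} J_{α+σ_j}(γ r(y)) dy for j = 1, 2, 3, with σ₁ = 1, σ₂ = −1, σ₃ = 0, and (r(y), φ(y)) the polar coordinates of (y₁, y₂) (i.e. y₁ = r(y) cos φ(y), y₂ = r(y) sin φ(y), r(y) > 0). -/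

import Mathlib

noncomputable section

open Real MeasureTheory

abbrev V3 : Type := Fin 3 → ℝ
abbrev C3 : Type := Fin 3 → ℂ

/-- Partial derivative of a scalar field in the `i`-th coordinate direction. -/
def pd (i : Fin 3) (f : V3 → ℂ) (x : V3) : ℂ := fderiv ℝ f x (Pi.single i 1)

/-- Componentwise Laplacian of a scalar field. -/
def lap (f : V3 → ℂ) (x : V3) : ℂ := ∑ i, pd i (pd i f) x

/-- Rotation by angle `θ` about the `e₃` axis. -/
def Rot (θ : ℝ) : Matrix (Fin 3) (Fin 3) ℝ :=
  !![Real.cos θ, -Real.sin θ, 0; Real.sin θ, Real.cos θ, 0; 0, 0, 1]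

/-- Complexified rotation matrix. -/
def RotC (θ : ℝ) : Matrix (Fin 3) (Fin 3) ℂ := (Rot θ).map (fun a => (a : ℂ))

/-- The polarization tensor N(n). -/
def Nmat (n : C3) : Matrix (Fin 3) (Fin 3) ℂ :=
  !![(n 0 + Complex.I * n 1)/2, (n 0 - Complex.I * n 1)/2, 0;
     (n 1 - Complex.I * n 0)/2, (n 1 + Complex.I * n 0)/2, 0;
     0, 0, n 2]

/-- Bessel function of integer order, via the Bessel integral
`J_ν(A) = (1/2π) ∫₀^{2π} e^{i(νφ − A sin φ)} dφ`. -/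
def besselJ (ν : ℤ) (A : ℝ) : ℂ :=
  (1/(2*Real.pi)) * ∫ φ in (0:ℝ)..(2*Real.pi),
    Complex.exp (Complex.I * (((ν : ℝ) * φ - A * Real.sin φ : ℝ) : ℂ))

/-- The Bessel vector `(J_{α+1}(γr), J_{α−1}(γr), J_α(γr))`. -/
def Jvec (α : ℤ) (γ r : ℝ) : C3 :=
  ![besselJ (α+1) (γ*r), besselJ (α-1) (γ*r), besselJ α (γ*r)]

/-- Twisted wave with parameters `(α, β, γ)` and polarization vector `n`,
expressed in cylindrical coordinates:
`E₀ = e^{i(αφ+βz)} R_φ N(n) (J_{α+1}(γr), J_{α−1}(γr), J_α(γr))ᵀ`. -/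
def twistedCyl (α : ℤ) (β γ : ℝ) (n : C3) (r φ z : ℝ) : C3 :=
  Complex.exp (Complex.I * (((α : ℝ) * φ + β * z : ℝ) : ℂ)) •
    (RotC φ).mulVec ((Nmat n).mulVec (Jvec α γ r))

/-- Radial polar coordinate of the first two components. -/
def polarR (y : V3) : ℝ := Real.sqrt (y 0 ^ 2 + y 1 ^ 2)

/-- Angular polar coordinate of the first two components. -/
def polarPhi (y : V3) : ℝ := Complex.arg ((y 0 : ℂ) + Complex.I * (y 1 : ℂ))

/-- The shifts σ = (1, −1, 0). -/
def sgn3 : Fin 3 → ℤ := ![1, -1, 0]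

/-- `besselJ ν` is continuous. -/
lemma besselJ_continuous (ν : ℤ) : Continuous (besselJ ν) := by
  unfold besselJ
  apply Continuous.mul continuous_const
  apply intervalIntegral.continuous_parametric_intervalIntegral_of_continuous'
  apply Complex.continuous_exp.comp
  fun_prop

/-- `besselJ` is bounded by one. -/
lemma besselJ_norm_le (ν : ℤ) (A : ℝ) : ‖besselJ ν A‖ ≤ 1 := by
  unfold besselJ
  rw [norm_mul]
  have h : ‖∫ φ in (0:ℝ)..(2*Real.pi),
      Complex.exp (Complex.I * (((ν : ℝ) * φ - A * Real.sin φ : ℝ) : ℂ))‖ ≤ 1 * |2*Real.pi - 0| := by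
    apply intervalIntegral.norm_integral_le_of_norm_le_const
    intro x _
    rw [Complex.norm_exp]
    simp [Complex.mul_re]
  have hπ := Real.pi_pos
  have h1 : ‖((1:ℂ)/(2*Real.pi))‖ = 1/(2*Real.pi) := by
    rw [show ((1:ℂ)/(2*Real.pi)) = ((1/(2*Real.pi) : ℝ) : ℂ) by push_cast; ring]
    rw [Complex.norm_real, Real.norm_eq_abs, abs_of_pos (by positivity)]
  rw [h1]
  refine le_trans (mul_le_mul_of_nonneg_left h (by positivity)) (le_of_eq ?_)
  rw [sub_zero, abs_of_pos (by positivity)]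
  field_simp

/-- Norm of a unimodular exponential. -/
lemma norm_exp_I_real (x : ℝ) : ‖Complex.exp (Complex.I * (x : ℂ))‖ = 1 := by
  rw [Complex.norm_exp]
  simp [Complex.mul_re]

/-- The key pointwise algebraic identity. -/
lemma key_identity (α : ℤ) (β γ Z : ℝ) (n : C3) (r φ z : ℝ) (c : ℂ) (i : Fin 3) :
    twistedCyl α β γ n r φ z i * c * Complex.exp (-Complex.I * ((Z * z : ℝ) : ℂ)) =
    ∑ j, Nmat n i j *
      (c * Complex.exp (Complex.I *
          ((((α + sgn3 j : ℤ) : ℝ) * φ + (β - Z) * z : ℝ) : ℂ)) *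
        besselJ (α + sgn3 j) (γ * r)) := by
  have hplus : Complex.exp (Complex.I * ((((α + 1 : ℤ) : ℝ) * φ + (β - Z) * z : ℝ) : ℂ))
      = (Complex.cos φ + Complex.sin φ * Complex.I) *
        (Complex.exp (Complex.I * (((α : ℝ) * φ + β * z : ℝ) : ℂ)) *
         Complex.exp (-Complex.I * ((Z * z : ℝ) : ℂ))) := by
    rw [← Complex.exp_mul_I, ← Complex.exp_add, ← Complex.exp_add]
    congr 1
    push_cast
    ring
  have hminus : Complex.exp (Complex.I * ((((α - 1 : ℤ) : ℝ) * φ + (β - Z) * z : ℝ) : ℂ))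
      = (Complex.cos φ - Complex.sin φ * Complex.I) *
        (Complex.exp (Complex.I * (((α : ℝ) * φ + β * z : ℝ) : ℂ)) *
         Complex.exp (-Complex.I * ((Z * z : ℝ) : ℂ))) := by
    rw [show (Complex.cos φ - Complex.sin φ * Complex.I)
        = Complex.cos (-φ) + Complex.sin (-φ) * Complex.I by
      rw [Complex.cos_neg, Complex.sin_neg]; ring]
    rw [← Complex.exp_mul_I, ← Complex.exp_add, ← Complex.exp_add]
    congr 1
    push_cast
    ring
  have hzero : Complex.exp (Complex.I * ((((α : ℤ) : ℝ) * φ + (β - Z) * z : ℝ) : ℂ))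
      = Complex.exp (Complex.I * (((α : ℝ) * φ + β * z : ℝ) : ℂ)) *
         Complex.exp (-Complex.I * ((Z * z : ℝ) : ℂ)) := by
    rw [← Complex.exp_add]
    congr 1
    push_cast
    ring
  fin_cases i <;>
    simp only [twistedCyl, RotC, Rot, Nmat, Jvec, sgn3, Fin.zero_eta, Fin.mk_one, Fin.reduceFinMk,
      Matrix.map_apply, Matrix.mulVec, dotProduct, Fin.sum_univ_three, Fin.isValue,
      Matrix.of_apply, Matrix.cons_val', Matrix.cons_val_zero, Matrix.cons_val_one,
      Matrix.head_cons, Matrix.empty_val', Matrix.cons_val_fin_one, Matrix.head_fin_const,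
      Pi.smul_apply, smul_eq_mul, Matrix.cons_val_two, Matrix.tail_cons, add_zero, sub_zero,
      Int.cast_zero, zero_mul, mul_zero, zero_add, Complex.ofReal_cos,
      Complex.ofReal_sin, Complex.ofReal_zero, Complex.ofReal_one, Complex.ofReal_neg] <;>
    (try rw [show α + -1 = α - 1 by ring]) <;>
    (try rw [hplus]) <;> (try rw [hminus]) <;> (try rw [hzero]) <;>
    ring_nf <;>
    (try simp only [Complex.I_sq]) <;>
    (try ring)

/-- **Axial generalized structure factor of a twisted wave.**
`∫ E₀(y) ρ(y) e^{−iZy₃} dy = N(n) v`, where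
`v_j = ∫ ρ(y) e^{i((α+σ_j)φ(y) + (β−Z)y₃)} J_{α+σ_j}(γ r(y)) dy`. -/
theorem axial_structure_factor
    (α : ℤ) (β γ : ℝ) (hγ : 0 < γ) (n : C3)
    (E : V3 → C3)
    (hE : ∀ r φ z : ℝ, 0 < r →
      E ![r * Real.cos φ, r * Real.sin φ, z] = twistedCyl α β γ n r φ z)
    (ρ : V3 → ℂ) (hρ : Integrable ρ) (Z : ℝ) :
    ∀ i : Fin 3,
      (∫ y : V3, E y i * ρ y * Complex.exp (-Complex.I * ((Z * y 2 : ℝ) : ℂ))) =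
      ∑ j, Nmat n i j *
        ∫ y : V3, ρ y *
          Complex.exp (Complex.I *
            ((((α + sgn3 j : ℤ) : ℝ) * polarPhi y + (β - Z) * y 2 : ℝ) : ℂ)) *
          besselJ (α + sgn3 j) (γ * polarR y) := by
  intro i
  -- measurability of the bounded factor
  have hphi : Measurable polarPhi := by
    apply Complex.measurable_arg.comp
    exact ((Complex.continuous_ofReal.comp (continuous_apply 0)).add
      (continuous_const.mul (Complex.continuous_ofReal.comp (continuous_apply 1)))).measurable
  have hrc : Continuous polarR := by
    unfold polarR; fun_prop
  have hmeas : ∀ j : Fin 3, Measurable (fun y : V3 =>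
      Complex.exp (Complex.I *
        ((((α + sgn3 j : ℤ) : ℝ) * polarPhi y + (β - Z) * y 2 : ℝ) : ℂ)) *
      besselJ (α + sgn3 j) (γ * polarR y)) := by
    intro j
    apply Measurable.mul
    · exact Complex.measurable_exp.comp (measurable_const.mul
        (Complex.measurable_ofReal.comp
          ((measurable_const.mul hphi).add (measurable_const.mul (measurable_pi_apply 2)))))
    · exact ((besselJ_continuous (α + sgn3 j)).comp
        (continuous_const.mul hrc)).measurable
  -- integrability of each term
  have hint : ∀ j : Fin 3, Integrable (fun y : V3 => ρ y *
      Complex.exp (Complex.I *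
        ((((α + sgn3 j : ℤ) : ℝ) * polarPhi y + (β - Z) * y 2 : ℝ) : ℂ)) *
      besselJ (α + sgn3 j) (γ * polarR y)) := by
    intro j
    have heq : (fun y : V3 => ρ y *
        Complex.exp (Complex.I *
          ((((α + sgn3 j : ℤ) : ℝ) * polarPhi y + (β - Z) * y 2 : ℝ) : ℂ)) *
        besselJ (α + sgn3 j) (γ * polarR y)) = fun y : V3 =>
        (Complex.exp (Complex.I *
          ((((α + sgn3 j : ℤ) : ℝ) * polarPhi y + (β - Z) * y 2 : ℝ) : ℂ)) *
        besselJ (α + sgn3 j) (γ * polarR y)) * ρ y := by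
      funext y; ring
    rw [heq]
    refine hρ.bdd_mul ((hmeas j).aestronglyMeasurable) (c := 1) (Filter.Eventually.of_forall fun y => ?_)
    rw [norm_mul]
    calc ‖Complex.exp _‖ * ‖besselJ _ _‖ ≤ 1 * 1 := by
          apply mul_le_mul (le_of_eq (norm_exp_I_real _)) (besselJ_norm_le _ _)
            (norm_nonneg _) zero_le_one
      _ = 1 := one_mul 1
  -- a.e. pointwise identity
  have hae : ∀ᵐ y : V3, E y i * ρ y * Complex.exp (-Complex.I * ((Z * y 2 : ℝ) : ℂ)) =
      ∑ j, Nmat n i j * (ρ y *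
        Complex.exp (Complex.I *
          ((((α + sgn3 j : ℤ) : ℝ) * polarPhi y + (β - Z) * y 2 : ℝ) : ℂ)) *
        besselJ (α + sgn3 j) (γ * polarR y)) := by
    have h0 : ∀ᵐ y : V3, y 0 ≠ (0:ℝ) := by
      have := MeasureTheory.Measure.ae_eval_ne (fun _ : Fin 3 => (volume : Measure ℝ)) 0 (0:ℝ)
      rwa [← MeasureTheory.volume_pi] at this
    filter_upwards [h0] with y hy
    set w : ℂ := (y 0 : ℂ) + Complex.I * (y 1 : ℂ) with hwdef
    have hwre : w.re = y 0 := by simp [hwdef]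
    have hwim : w.im = y 1 := by simp [hwdef]
    have hw : w ≠ 0 := by
      intro h
      apply hy
      rw [← hwre, h, Complex.zero_re]
    have habs : polarR y = ‖w‖ := by
      rw [Complex.norm_def, Complex.normSq_apply, hwre, hwim]
      unfold polarR
      ring_nf
    have hrpos : 0 < polarR y := by
      rw [habs]; exact norm_pos_iff.mpr hw
    have hane : ‖w‖ ≠ 0 := by rw [← habs]; exact ne_of_gt hrpos
    have hcos : polarR y * Real.cos (polarPhi y) = y 0 := by
      have := Complex.cos_arg hw
      rw [polarPhi, ← hwdef, this, habs, hwre]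
      field_simp
    have hsin : polarR y * Real.sin (polarPhi y) = y 1 := by
      have := Complex.sin_arg w
      rw [polarPhi, ← hwdef, this, habs, hwim]
      field_simp
    have hy3 : y = ![polarR y * Real.cos (polarPhi y), polarR y * Real.sin (polarPhi y), y 2] := by
      funext k
      fin_cases k <;> simp [hcos, hsin]
    have hEy : E y = twistedCyl α β γ n (polarR y) (polarPhi y) (y 2) := by
      conv_lhs => rw [hy3]
      exact hE (polarR y) (polarPhi y) (y 2) hrpos
    rw [hEy]
    exact key_identity α β γ Z n (polarR y) (polarPhi y) (y 2) (ρ y) i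
  rw [integral_congr_ae hae,
    integral_finset_sum _ (fun j _ => (hint j).const_mul (Nmat n i j))]
  exact Finset.sum_congr rfl fun j _ => MeasureTheory.integral_const_mul _ _
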